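/- Fix vertices u,v and an integer d ≥ 1, and let D be an edge set with |D| ≤ d such that u,v are connected in G−D. Suppose u' is u-clean and v' is v-clean with respect to D, and π_{G−D}(u,v) passes through both u' and v'. Let D* be an edge set with |D*| ≤ d maximizing |π_{G−D'}(u,v)| over all edge sets D' with |D'| ≤ d such that π(u,u') and π(v',v) contain no edge of D' and no vertex of T_u(u') ∪ T_v(v') is incident to an edge of D' (assume u,v are connected in G−D' for all such D'). Let H = { w ∈ V(D*) : both π(u,w) and π(w,v) contain an edge of D }. Then either |π_{G−D}(u,v)| = |π_{G−D*}(u,v)|, or π_{G−D}(u,v) passes through some vertex of H. -/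

import Mathlib

open SimpleGraph

variable {V : Type*}

/-- Total weight of a walk with respect to edge weights `w`. -/
def walkWeight (w : Sym2 V → ℝ) {G : SimpleGraph V} {a b : V} (p : G.Walk a b) : ℝ :=
  (p.edges.map w).sum

/-- `p` is the/a minimum-weight path from `a` to `b` in `G`. -/
def IsShortestPath (w : Sym2 V → ℝ) (G : SimpleGraph V) {a b : V} (p : G.Walk a b) : Prop :=
  p.IsPath ∧ ∀ q : G.Walk a b, q.IsPath → walkWeight w p ≤ walkWeight w q

/-- `Decomposable w G k p` : `p` is the concatenation of at most `k+1` shortest paths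
of `G` interleaved with at most `k` single edges. -/
inductive Decomposable (w : Sym2 V → ℝ) (G : SimpleGraph V) :
    ℕ → ∀ {a b : V}, G.Walk a b → Prop
  | single {a b : V} (k : ℕ) (p : G.Walk a b) (hp : IsShortestPath w G p) :
      Decomposable w G k p
  | cons {a b c d : V} (k : ℕ) (p : G.Walk a b) (h : G.Adj b c) (q : G.Walk c d)
      (hp : IsShortestPath w G p) (hq : Decomposable w G k q) :
      Decomposable w G (k + 1) (p.append (Walk.cons h q))

/-- The rank of a walk `p` in `G`: the least `k` such that `p` is `k`-decomposable. -/
noncomputable def pathRank (w : Sym2 V → ℝ) (G : SimpleGraph V) {a b : V} (p : G.Walk a b) : ℕ :=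
  sInf {k | Decomposable w G k p}

namespace Stmt6Aux

variable {G : SimpleGraph V} {w : Sym2 V → ℝ} {a b c x y : V}

lemma walkWeight_append (p : G.Walk a b) (q : G.Walk b c) :
    walkWeight w (p.append q) = walkWeight w p + walkWeight w q := by
  simp [walkWeight, Walk.edges_append]

lemma walkWeight_transfer {H : SimpleGraph V} (p : G.Walk a b) (hp) :
    walkWeight w (p.transfer H hp) = walkWeight w p := by
  simp [walkWeight, Walk.edges_transfer]

lemma sum_map_le_of_subset [DecidableEq V] {f : Sym2 V → ℝ} :
    ∀ {l₂ l₁ : List (Sym2 V)}, l₁.Nodup → l₁ ⊆ l₂ → (∀ e ∈ l₂, 0 ≤ f e) →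
      (l₁.map f).sum ≤ (l₂.map f).sum := by
  intro l₂
  induction l₂ with
  | nil => intro l₁ _ hs _; rw [List.subset_nil.mp hs]
  | cons a t ih =>
    intro l₁ hnd hs hnn
    have hnnt : ∀ e ∈ t, 0 ≤ f e := fun e he => hnn e (List.mem_cons_of_mem a he)
    by_cases ha : a ∈ l₁
    · have hperm : List.Perm l₁ (a :: l₁.erase a) := List.perm_cons_erase ha
      have h1 : (l₁.map f).sum = f a + ((l₁.erase a).map f).sum := by
        rw [(hperm.map f).sum_eq, List.map_cons, List.sum_cons]
      have h2 : (l₁.erase a).Nodup := List.Nodup.erase a hnd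
      have h3 : l₁.erase a ⊆ t := by
        intro z hz
        have hz1 : z ∈ l₁ := List.mem_of_mem_erase hz
        have hzne : z ≠ a := by
          rintro rfl
          exact (List.Nodup.not_mem_erase hnd) hz
        rcases List.mem_cons.mp (hs hz1) with h | h
        · exact absurd h hzne
        · exact h
      rw [h1, List.map_cons, List.sum_cons]
      exact add_le_add le_rfl (ih h2 h3 hnnt)
    · have h3 : l₁ ⊆ t := by
        intro z hz
        rcases List.mem_cons.mp (hs hz) with h | h
        · exact absurd hz (h ▸ ha)
        · exact h
      rw [List.map_cons, List.sum_cons]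
      have h4 := ih hnd h3 hnnt
      have hfa : 0 ≤ f a := hnn a List.mem_cons_self
      linarith

lemma walkWeight_bypass_le [DecidableEq V] (hw : ∀ e ∈ G.edgeSet, 0 ≤ w e) (r : G.Walk a b) :
    walkWeight w r.bypass ≤ walkWeight w r :=
  sum_map_le_of_subset (r.bypass_isPath.isTrail.edges_nodup) (r.edges_bypass_subset)
    (fun e he => hw e (r.edges_subset_edgeSet he))

lemma le_walk [DecidableEq V] (hw : ∀ e ∈ G.edgeSet, 0 ≤ w e) {p : G.Walk a b}
    (hp : IsShortestPath w G p) (r : G.Walk a b) : walkWeight w p ≤ walkWeight w r :=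
  le_trans (hp.2 r.bypass r.bypass_isPath) (walkWeight_bypass_le hw r)

lemma takeUntil_shortest [DecidableEq V] (hw : ∀ e ∈ G.edgeSet, 0 ≤ w e) {p : G.Walk a b}
    (hp : IsShortestPath w G p) (hx : x ∈ p.support) :
    IsShortestPath w G (p.takeUntil x hx) := by
  refine ⟨hp.1.takeUntil hx, fun q hq => ?_⟩
  have h1 := le_walk hw hp (q.append (p.dropUntil x hx))
  rw [walkWeight_append] at h1
  have h2 : walkWeight w p
      = walkWeight w (p.takeUntil x hx) + walkWeight w (p.dropUntil x hx) := by
    conv_lhs => rw [← p.take_spec hx]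
    rw [walkWeight_append]
  linarith

lemma dropUntil_shortest [DecidableEq V] (hw : ∀ e ∈ G.edgeSet, 0 ≤ w e) {p : G.Walk a b}
    (hp : IsShortestPath w G p) (hx : x ∈ p.support) :
    IsShortestPath w G (p.dropUntil x hx) := by
  refine ⟨hp.1.dropUntil hx, fun q hq => ?_⟩
  have h1 := le_walk hw hp ((p.takeUntil x hx).append q)
  rw [walkWeight_append] at h1
  have h2 : walkWeight w p
      = walkWeight w (p.takeUntil x hx) + walkWeight w (p.dropUntil x hx) := by
    conv_lhs => rw [← p.take_spec hx]
    rw [walkWeight_append]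
  linarith

lemma shortest_transfer {H : SimpleGraph V} (hle : H ≤ G) {p : G.Walk a b}
    (hp : IsShortestPath w G p) (hcond : ∀ e ∈ p.edges, e ∈ H.edgeSet) :
    IsShortestPath w H (p.transfer H hcond) := by
  refine ⟨hp.1.transfer hcond, fun q hq => ?_⟩
  rw [walkWeight_transfer]
  have hq' : ∀ e ∈ q.edges, e ∈ G.edgeSet :=
    fun e he => (edgeSet_mono hle) (q.edges_subset_edgeSet he)
  have := hp.2 (q.transfer G hq') (hq.transfer hq')
  rwa [walkWeight_transfer] at this

lemma takeUntil_cons_ne [DecidableEq V] {p : G.Walk b c} (r : G.Adj a b)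
    (hx : x ∈ (Walk.cons r p).support) (hxa : a ≠ x) (hx' : x ∈ p.support) :
    (Walk.cons r p).takeUntil x hx = Walk.cons r (p.takeUntil x hx') := by
  simp [Walk.takeUntil, hxa]

lemma mem_takeUntil_total [DecidableEq V] :
    ∀ {a b : V} (p : G.Walk a b) (hx : x ∈ p.support) (hy : y ∈ p.support),
      y ∈ (p.takeUntil x hx).support ∨ x ∈ (p.takeUntil y hy).support := by
  intro a b p
  induction p with
  | nil =>
    intro hx hy
    simp only [Walk.mem_support_nil_iff] at hx hy
    have hxy : y = x := hy.trans hx.symm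
    subst hxy
    left
    exact Walk.end_mem_support _
  | @cons a c b r p ih =>
    intro hx hy
    by_cases hxa : a = x
    · right; subst hxa; exact Walk.start_mem_support _
    by_cases hya : a = y
    · left; subst hya; exact Walk.start_mem_support _
    have hx' : x ∈ p.support := by
      have hx2 : x ∈ a :: p.support := by rwa [Walk.support_cons] at hx
      rcases List.mem_cons.mp hx2 with h | h
      · exact absurd h.symm hxa
      · exact h
    have hy' : y ∈ p.support := by
      have hy2 : y ∈ a :: p.support := by rwa [Walk.support_cons] at hy
      rcases List.mem_cons.mp hy2 with h | h
      · exact absurd h.symm hya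
      · exact h
    rw [takeUntil_cons_ne r hx hxa hx', takeUntil_cons_ne r hy hya hy']
    rcases ih hx' hy' with h | h
    · left; rw [Walk.support_cons]; exact List.mem_cons_of_mem _ h
    · right; rw [Walk.support_cons]; exact List.mem_cons_of_mem _ h

lemma takeUntil_antisymm [DecidableEq V] :
    ∀ {a b : V} (p : G.Walk a b) (hx : x ∈ p.support) (hy : y ∈ p.support),
      y ∈ (p.takeUntil x hx).support → x ∈ (p.takeUntil y hy).support → x = y := by
  intro a b p
  induction p with
  | nil =>
    intro hx hy _ _
    simp only [Walk.mem_support_nil_iff] at hx hy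
    exact hx.trans hy.symm
  | @cons a c b r p ih =>
    intro hx hy h1 h2
    by_cases hxa : a = x
    · subst hxa
      -- takeUntil at start is nil: support = [a]
      have : (Walk.cons r p).takeUntil a hx = Walk.nil := by
        simp [Walk.takeUntil]
      rw [this] at h1
      simp only [Walk.support_nil, List.mem_singleton] at h1
      exact h1.symm
    by_cases hya : a = y
    · subst hya
      have : (Walk.cons r p).takeUntil a hy = Walk.nil := by
        simp [Walk.takeUntil]
      rw [this] at h2
      simp only [Walk.support_nil, List.mem_singleton] at h2
      exact h2
    have hx' : x ∈ p.support := by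
      have hx2 : x ∈ a :: p.support := by rwa [Walk.support_cons] at hx
      rcases List.mem_cons.mp hx2 with h | h
      · exact absurd h.symm hxa
      · exact h
    have hy' : y ∈ p.support := by
      have hy2 : y ∈ a :: p.support := by rwa [Walk.support_cons] at hy
      rcases List.mem_cons.mp hy2 with h | h
      · exact absurd h.symm hya
      · exact h
    rw [takeUntil_cons_ne r hx hxa hx'] at h1
    rw [takeUntil_cons_ne r hy hya hy'] at h2
    simp only [Walk.support_cons, List.mem_cons] at h1 h2
    rcases h1 with h1 | h1
    · exact absurd h1.symm hya
    rcases h2 with h2 | h2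
    · exact absurd h2.symm hxa
    exact ih hx' hy' h1 h2

lemma eq_of_mem_take_mem_drop [DecidableEq V] {p : G.Walk a b} (hp : p.IsPath)
    (hy : y ∈ p.support) (h1 : x ∈ (p.takeUntil y hy).support)
    (h2 : x ∈ (p.dropUntil y hy).support) : x = y := by
  have hnd : p.support.Nodup := hp.support_nodup
  have hsplit : p.support
      = (p.takeUntil y hy).support ++ (p.dropUntil y hy).support.tail := by
    conv_lhs => rw [← p.take_spec hy]
    rw [Walk.support_append]
  rw [hsplit] at hnd
  have hdisj := List.disjoint_of_nodup_append hnd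
  have h2' : x ∈ y :: (p.dropUntil y hy).support.tail := by
    rw [← Walk.support_eq_cons]; exact h2
  rcases List.mem_cons.mp h2' with h | h
  · exact h
  · exact absurd h1 (fun hc => hdisj hc h)

lemma mem_take_of_not_mem_drop [DecidableEq V] {p : G.Walk a b}
    (hy : y ∈ p.support) (hx : x ∈ p.support) (h : x ∉ (p.dropUntil y hy).support) :
    x ∈ (p.takeUntil y hy).support := by
  have hsplit : p.support
      = (p.takeUntil y hy).support ++ (p.dropUntil y hy).support.tail := by
    conv_lhs => rw [← p.take_spec hy]
    rw [Walk.support_append]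
  rw [hsplit] at hx
  rcases List.mem_append.mp hx with h1 | h1
  · exact h1
  · exact absurd (by rw [Walk.support_eq_cons (p.dropUntil y hy)]; exact List.mem_cons_of_mem _ h1) h

end Stmt6Aux

/-- Case I, Claim 4.2.  Suppose `u'` is `u`-clean and `v'` is `v`-clean
w.r.t. `D`, and `π_{G−D}(u,v)` passes through both `u'` and `v'`.  Let `Dstar` (with
`|Dstar| ≤ d`) maximize `|π_{G−D'}(u,v)|` over all edge sets `D'` with `|D'| ≤ d` such that
`π(u,u')` and `π(v',v)` contain no edge of `D'` and no vertex of `T_u(u') ∪ T_v(v')` is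
incident to an edge of `D'`.  With `H = {x ∈ V(Dstar) : both π(u,x) and π(x,v) contain an
edge of D}`, either `|π_{G−D}(u,v)| = |π_{G−Dstar}(u,v)|` or `π_{G−D}(u,v)` passes through
some vertex of `H`. -/
theorem stmt6 [Fintype V] [DecidableEq V] (G : SimpleGraph V) (w : Sym2 V → ℝ)
    (hw : ∀ e ∈ G.edgeSet, 0 < w e)
    -- shortest paths in G, assumed unique (this also makes the tree T_u well defined:
    -- T_u(x) is the set of vertices z with x on π(u,z))
    (πG : ∀ a b : V, G.Walk a b) (hπG : ∀ a b : V, IsShortestPath w G (πG a b))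
    (huniqG : ∀ (a b : V) (p q : G.Walk a b),
      IsShortestPath w G p → IsShortestPath w G q → p = q)
    (huniqAll : ∀ (D' : Set (Sym2 V)) (a b : V) (p q : (G.deleteEdges D').Walk a b),
      IsShortestPath w (G.deleteEdges D') p → IsShortestPath w (G.deleteEdges D') q → p = q)
    (u v u' v' : V) (d : ℕ) (hd : 1 ≤ d)
    (D : Finset (Sym2 V)) (hDsub : ↑D ⊆ G.edgeSet) (hDcard : D.card ≤ d)
    -- π_{G−D}(u,v) (so u, v are connected in G − D)
    (PD : (G.deleteEdges ↑D).Walk u v) (hPD : IsShortestPath w (G.deleteEdges ↑D) PD)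
    -- u' is u-clean: π(u,u') contains no edge of D, and no vertex of T_u(u') is incident
    -- to an edge of D
    (hu'clean : (∀ e ∈ (πG u u').edges, e ∉ D) ∧
      ∀ x : V, u' ∈ (πG u x).support → ∀ e ∈ D, x ∉ e)
    -- v' is v-clean
    (hv'clean : (∀ e ∈ (πG v' v).edges, e ∉ D) ∧
      ∀ x : V, v' ∈ (πG x v).support → ∀ e ∈ D, x ∉ e)
    -- π_{G−D}(u,v) passes through u' and v'
    (hu'P : u' ∈ PD.support) (hv'P : v' ∈ PD.support)
    (Dstar : Finset (Sym2 V)) (hDstarcard : Dstar.card ≤ d)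
    -- Dstar satisfies condition (α)
    (hDstarcond : (∀ e ∈ (πG u u').edges, e ∉ Dstar) ∧ (∀ e ∈ (πG v' v).edges, e ∉ Dstar) ∧
      ∀ x : V, (u' ∈ (πG u x).support ∨ v' ∈ (πG x v).support) → ∀ e ∈ Dstar, x ∉ e)
    -- u and v are connected in G − D' for every D' with |D'| ≤ d satisfying (α)
    (hconn : ∀ D' : Finset (Sym2 V), D'.card ≤ d →
      (∀ e ∈ (πG u u').edges, e ∉ D') → (∀ e ∈ (πG v' v).edges, e ∉ D') →
      (∀ x : V, (u' ∈ (πG u x).support ∨ v' ∈ (πG x v).support) → ∀ e ∈ D', x ∉ e) →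
      (G.deleteEdges ↑D').Reachable u v)
    -- π_{G−Dstar}(u,v)
    (PDstar : (G.deleteEdges ↑Dstar).Walk u v)
    (hPDstar : IsShortestPath w (G.deleteEdges ↑Dstar) PDstar)
    -- Dstar maximizes |π_{G−D'}(u,v)| over all D' with |D'| ≤ d satisfying (α)
    (hmax : ∀ D' : Finset (Sym2 V), D'.card ≤ d →
      (∀ e ∈ (πG u u').edges, e ∉ D') → (∀ e ∈ (πG v' v).edges, e ∉ D') →
      (∀ x : V, (u' ∈ (πG u x).support ∨ v' ∈ (πG x v).support) → ∀ e ∈ D', x ∉ e) →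
      ∀ Q : (G.deleteEdges ↑D').Walk u v, IsShortestPath w (G.deleteEdges ↑D') Q →
        walkWeight w Q ≤ walkWeight w PDstar) :
    walkWeight w PD = walkWeight w PDstar ∨
      ∃ x ∈ PD.support, (∃ e ∈ Dstar, x ∈ e) ∧
        (∃ e ∈ (πG u x).edges, e ∈ D) ∧ (∃ e ∈ (πG x v).edges, e ∈ D) := by
  classical
  have hwD : ∀ e ∈ (G.deleteEdges (↑D : Set (Sym2 V))).edgeSet, 0 ≤ w e :=
    fun e he => le_of_lt (hw e (edgeSet_mono (G.deleteEdges_le _) he))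
  have hDalpha : ∀ x : V, (u' ∈ (πG u x).support ∨ v' ∈ (πG x v).support) →
      ∀ e ∈ D, x ∉ e := by
    intro x hx e he
    rcases hx with h | h
    · exact hu'clean.2 x h e he
    · exact hv'clean.2 x h e he
  by_cases hDisj : ∀ e ∈ PD.edges, e ∉ Dstar
  · left
    have h1 : walkWeight w PD ≤ walkWeight w PDstar :=
      hmax D hDcard hu'clean.1 hv'clean.1 hDalpha PD hPD
    have hcond : ∀ e ∈ PD.edges, e ∈ (G.deleteEdges (↑Dstar : Set (Sym2 V))).edgeSet := by
      intro e he
      rw [edgeSet_deleteEdges]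
      exact ⟨edgeSet_mono (G.deleteEdges_le _) (PD.edges_subset_edgeSet he), hDisj e he⟩
    have h2 := hPDstar.2 (PD.transfer _ hcond) (hPD.1.transfer hcond)
    rw [Stmt6Aux.walkWeight_transfer] at h2
    linarith
  · right
    push_neg at hDisj
    obtain ⟨e, hePD, heD⟩ := hDisj
    induction e using Sym2.ind with
    | _ x y =>
    have hxsup : x ∈ PD.support := PD.fst_mem_support_of_mem_edges hePD
    have hxe : x ∈ (s(x, y) : Sym2 V) := Sym2.mem_mk_left x y
    have hα := hDstarcond.2.2 x
    have hnu' : u' ∉ (πG u x).support := fun h => (hα (Or.inl h) _ heD) hxe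
    have hnv' : v' ∉ (πG x v).support := fun h => (hα (Or.inr h) _ heD) hxe
    refine ⟨x, hxsup, ⟨s(x, y), heD, hxe⟩, ?_, ?_⟩
    · by_contra hA
      push_neg at hA
      have hcondux : ∀ e' ∈ (πG u x).edges,
          e' ∈ (G.deleteEdges (↑D : Set (Sym2 V))).edgeSet := by
        intro e' he'
        rw [edgeSet_deleteEdges]
        exact ⟨(πG u x).edges_subset_edgeSet he', hA e' he'⟩
      have heq := huniqAll ↑D u x (PD.takeUntil x hxsup) ((πG u x).transfer _ hcondux)
        (Stmt6Aux.takeUntil_shortest hwD hPD hxsup)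
        (Stmt6Aux.shortest_transfer (G.deleteEdges_le _) (hπG u x) hcondux)
      have hnu'take : u' ∉ (PD.takeUntil x hxsup).support := by
        rw [heq, Walk.support_transfer]; exact hnu'
      have hxtake : x ∈ (PD.takeUntil u' hu'P).support :=
        (Stmt6Aux.mem_takeUntil_total PD hxsup hu'P).resolve_left hnu'take
      have hcondu' : ∀ e' ∈ (πG u u').edges,
          e' ∈ (G.deleteEdges (↑D : Set (Sym2 V))).edgeSet := by
        intro e' he'
        rw [edgeSet_deleteEdges]
        exact ⟨(πG u u').edges_subset_edgeSet he', hu'clean.1 e' he'⟩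
      have heq2 := huniqAll ↑D u u' (PD.takeUntil u' hu'P) ((πG u u').transfer _ hcondu')
        (Stmt6Aux.takeUntil_shortest hwD hPD hu'P)
        (Stmt6Aux.shortest_transfer (G.deleteEdges_le _) (hπG u u') hcondu')
      have hePD' : s(x, y) ∈ ((PD.takeUntil u' hu'P).append (PD.dropUntil u' hu'P)).edges := by
        rw [PD.take_spec hu'P]; exact hePD
      rw [Walk.edges_append, List.mem_append] at hePD'
      rcases hePD' with h | h
      · rw [heq2, Walk.edges_transfer] at h
        exact hDstarcond.1 _ h heD
      · have hxdrop : x ∈ (PD.dropUntil u' hu'P).support :=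
          (PD.dropUntil u' hu'P).fst_mem_support_of_mem_edges h
        have hxu' : x = u' := Stmt6Aux.eq_of_mem_take_mem_drop hPD.1 hu'P hxtake hxdrop
        subst hxu'
        exact hnu' (Walk.end_mem_support _)
    · by_contra hB
      push_neg at hB
      have hcondxv : ∀ e' ∈ (πG x v).edges,
          e' ∈ (G.deleteEdges (↑D : Set (Sym2 V))).edgeSet := by
        intro e' he'
        rw [edgeSet_deleteEdges]
        exact ⟨(πG x v).edges_subset_edgeSet he', hB e' he'⟩
      have heq := huniqAll ↑D x v (PD.dropUntil x hxsup) ((πG x v).transfer _ hcondxv)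
        (Stmt6Aux.dropUntil_shortest hwD hPD hxsup)
        (Stmt6Aux.shortest_transfer (G.deleteEdges_le _) (hπG x v) hcondxv)
      have hnv'drop : v' ∉ (PD.dropUntil x hxsup).support := by
        rw [heq, Walk.support_transfer]; exact hnv'
      have hv'take : v' ∈ (PD.takeUntil x hxsup).support :=
        Stmt6Aux.mem_take_of_not_mem_drop hxsup hv'P hnv'drop
      have hcondv' : ∀ e' ∈ (πG v' v).edges,
          e' ∈ (G.deleteEdges (↑D : Set (Sym2 V))).edgeSet := by
        intro e' he'
        rw [edgeSet_deleteEdges]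
        exact ⟨(πG v' v).edges_subset_edgeSet he', hv'clean.1 e' he'⟩
      have heq2 := huniqAll ↑D v' v (PD.dropUntil v' hv'P) ((πG v' v).transfer _ hcondv')
        (Stmt6Aux.dropUntil_shortest hwD hPD hv'P)
        (Stmt6Aux.shortest_transfer (G.deleteEdges_le _) (hπG v' v) hcondv')
      have hePD' : s(x, y) ∈ ((PD.takeUntil v' hv'P).append (PD.dropUntil v' hv'P)).edges := by
        rw [PD.take_spec hv'P]; exact hePD
      rw [Walk.edges_append, List.mem_append] at hePD'
      rcases hePD' with h | h
      · have hxtakev' : x ∈ (PD.takeUntil v' hv'P).support :=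
          (PD.takeUntil v' hv'P).fst_mem_support_of_mem_edges h
        have hxv' : x = v' := Stmt6Aux.takeUntil_antisymm PD hxsup hv'P hv'take hxtakev'
        subst hxv'
        exact hnv' (Walk.start_mem_support _)
      · rw [heq2, Walk.edges_transfer] at h
        exact hDstarcond.2.1 _ h heD
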